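/- There exists a real constant c₀ > 0 such that for every natural number n, ∑_{m=0}^{n} (c₀/(m²+1))·(c₀/((n−m)²+1)) ≤ c₀/(n²+1). Equivalently, the power series φ(x) = c₀·∑_{n=0}^∞ xⁿ/(n²+1) satisfies, coefficient by coefficient, φ² ≪ φ (each coefficient of the Cauchy product φ·φ is at most the corresponding coefficient of φ). -/

import Mathlib

private lemma pos_den (m : ℕ) : (0:ℝ) < (m:ℝ)^2 + 1 := by positivity

private lemma sum_inv_sq_le (N : ℕ) :
    ∑ m ∈ Finset.range N, (1:ℝ) / ((m:ℝ)^2 + 1) ≤ 3 := by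
  have key : ∀ N : ℕ, 1 ≤ N →
      ∑ m ∈ Finset.range N, (1:ℝ) / ((m:ℝ)^2 + 1) ≤ 3 - 2 / (N:ℝ) := by
    intro N hN
    induction N with
    | zero => omega
    | succ k ih =>
      rcases Nat.eq_zero_or_pos k with hk | hk
      · subst hk; simp; norm_num
      · have ihk := ih hk
        rw [Finset.sum_range_succ]
        have hk1 : (1:ℝ) ≤ (k:ℝ) := by exact_mod_cast hk
        have hkpos : (0:ℝ) < (k:ℝ) := by linarith
        have hstep : (1:ℝ) / ((k:ℝ)^2 + 1) ≤ 2 / (k:ℝ) - 2 / ((k:ℝ)+1) := by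
          rw [div_sub_div _ _ (ne_of_gt hkpos) (by positivity),
            div_le_div_iff₀ (by positivity) (by positivity)]
          nlinarith
        push_cast
        linarith
  rcases Nat.eq_zero_or_pos N with h | h
  · subst h; simp
  · have h1 := key N h
    have h2 : (0:ℝ) ≤ 2 / (N:ℝ) := by positivity
    linarith

private lemma aux (a b : ℕ) :
    (1:ℝ) / (((a:ℝ)^2 + 1) * ((b:ℝ)^2 + 1)) ≤
      4 / (((a+b:ℕ):ℝ)^2 + 1) * (1 / ((a:ℝ)^2 + 1) + 1 / ((b:ℝ)^2 + 1)) := by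
  push_cast
  have ha := pos_den a
  have hb := pos_den b
  have hn : (0:ℝ) < ((a:ℝ)+(b:ℝ))^2 + 1 := by positivity
  rcases le_total a b with h | h
  · have h' : (a:ℝ) ≤ b := by exact_mod_cast h
    have hmax : ((a:ℝ)+(b:ℝ))^2 + 1 ≤ 4 * ((b:ℝ)^2 + 1) := by
      nlinarith [sq_nonneg ((a:ℝ)-(b:ℝ))]
    have h1 : (1:ℝ)/(((a:ℝ)^2+1)*((b:ℝ)^2+1)) ≤ 4/(((a:ℝ)+(b:ℝ))^2+1) * (1/((a:ℝ)^2+1)) := by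
      rw [div_mul_div_comm, div_le_div_iff₀ (by positivity) (by positivity)]
      nlinarith [mul_le_mul_of_nonneg_left hmax ha.le]
    have h2 : (0:ℝ) ≤ 4/(((a:ℝ)+(b:ℝ))^2+1) * (1/((b:ℝ)^2+1)) := by positivity
    linarith
  · have h' : (b:ℝ) ≤ a := by exact_mod_cast h
    have hmax : ((a:ℝ)+(b:ℝ))^2 + 1 ≤ 4 * ((a:ℝ)^2 + 1) := by
      nlinarith [sq_nonneg ((a:ℝ)-(b:ℝ))]
    have h1 : (1:ℝ)/(((a:ℝ)^2+1)*((b:ℝ)^2+1)) ≤ 4/(((a:ℝ)+(b:ℝ))^2+1) * (1/((b:ℝ)^2+1)) := by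
      rw [div_mul_div_comm, div_le_div_iff₀ (by positivity) (by positivity)]
      nlinarith [mul_le_mul_of_nonneg_left hmax hb.le]
    have h2 : (0:ℝ) ≤ 4/(((a:ℝ)+(b:ℝ))^2+1) * (1/((a:ℝ)^2+1)) := by positivity
    linarith

theorem exists_majorant_series_sq_le :
    ∃ c₀ : ℝ, 0 < c₀ ∧ ∀ n : ℕ,
      ∑ m ∈ Finset.range (n + 1),
        (c₀ / ((m : ℝ) ^ 2 + 1)) * (c₀ / (((n - m : ℕ) : ℝ) ^ 2 + 1))
        ≤ c₀ / ((n : ℝ) ^ 2 + 1) := by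
  refine ⟨1/24, by norm_num, fun n => ?_⟩
  have hn : (0:ℝ) < (n:ℝ)^2 + 1 := pos_den n
  have hterm : ∀ m ∈ Finset.range (n+1),
      ((1:ℝ)/24 / ((m:ℝ)^2+1)) * ((1:ℝ)/24 / (((n-m:ℕ):ℝ)^2+1)) ≤
        (1/24:ℝ)^2 * (4 / ((n:ℝ)^2 + 1)) * (1 / ((m:ℝ)^2 + 1) + 1 / (((n-m:ℕ):ℝ)^2 + 1)) := by
    intro m hm
    have hm' : m ≤ n := Nat.lt_succ_iff.mp (Finset.mem_range.mp hm)
    have hab : m + (n - m) = n := by omega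
    have h := aux m (n - m)
    rw [hab] at h
    have hL : ((1:ℝ)/24 / ((m:ℝ)^2+1)) * ((1:ℝ)/24 / (((n-m:ℕ):ℝ)^2+1)) =
        (1/24:ℝ)^2 * ((1:ℝ) / (((m:ℝ)^2 + 1) * (((n-m:ℕ):ℝ)^2 + 1))) := by
      field_simp
    rw [hL, mul_assoc]
    exact mul_le_mul_of_nonneg_left h (by positivity)
  calc ∑ m ∈ Finset.range (n + 1),
        ((1:ℝ)/24 / ((m : ℝ) ^ 2 + 1)) * ((1:ℝ)/24 / (((n - m : ℕ) : ℝ) ^ 2 + 1))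
      ≤ ∑ m ∈ Finset.range (n+1), (1/24:ℝ)^2 * (4 / ((n:ℝ)^2 + 1)) *
          (1 / ((m:ℝ)^2 + 1) + 1 / (((n-m:ℕ):ℝ)^2 + 1)) :=
        Finset.sum_le_sum hterm
    _ = (1/24:ℝ)^2 * (4 / ((n:ℝ)^2+1)) * (∑ m ∈ Finset.range (n+1), (1:ℝ)/((m:ℝ)^2+1)
          + ∑ m ∈ Finset.range (n+1), (1:ℝ)/(((n-m:ℕ):ℝ)^2+1)) := by
        rw [← Finset.mul_sum, Finset.sum_add_distrib]
    _ ≤ (1/24:ℝ)^2 * (4 / ((n:ℝ)^2+1)) * (3 + 3) := by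
        have h1 := sum_inv_sq_le (n+1)
        have h2 : ∑ m ∈ Finset.range (n+1), (1:ℝ)/(((n-m:ℕ):ℝ)^2+1) ≤ 3 := by
          have h3 := sum_inv_sq_le (n+1)
          rw [← Finset.sum_range_reflect (fun m => (1:ℝ)/((m:ℝ)^2+1)) (n+1)] at h3
          have heq : ∑ m ∈ Finset.range (n+1), (1:ℝ)/(((n-m:ℕ):ℝ)^2+1)
              = ∑ j ∈ Finset.range (n+1), (1:ℝ)/(((n+1-1-j:ℕ):ℝ)^2+1) := by
            apply Finset.sum_congr rfl
            intro m hm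
            have : n + 1 - 1 - m = n - m := by omega
            rw [this]
          rw [heq]; exact h3
        exact mul_le_mul_of_nonneg_left (by linarith) (by positivity)
    _ = (1:ℝ)/24 / ((n:ℝ)^2+1) := by field_simp; ring
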